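/- Let p be a prime, R ⊆ F_p* a multiplicative subgroup, and Q ⊆ F_p a nonempty R-invariant set. Then for every ξ ∈ F_p with ξ ≠ 0, the Fourier coefficient satisfies |Q̂(ξ)| < |Q|^{1/2}·p^{1/2}·|R|^{−1/2}. -/

import Mathlib

open Finset Pointwise

/-- `R` is (the image in `F_p` of) a multiplicative subgroup of `F_p^*`. -/
def IsMulSubgroup (p : ℕ) (R : Finset (ZMod p)) : Prop :=
  ∃ H : Subgroup (ZMod p)ˣ, (R : Set (ZMod p)) = Units.val '' (H : Set (ZMod p)ˣ)

/-- The Fourier coefficient `Q̂(ξ) = ∑_{x ∈ Q} e^{-2πi ξ x / p}`. -/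
noncomputable def fCoeff (p : ℕ) (Q : Finset (ZMod p)) (ξ : ZMod p) : ℂ :=
  ∑ x ∈ Q, Complex.exp (-((2 : ℂ) * (Real.pi : ℂ) * Complex.I * ((ξ * x).val : ℂ) / (p : ℂ)))

noncomputable def chi (p : ℕ) (a : ZMod p) : ℂ :=
  Complex.exp (((-(2 * Real.pi * a.val / p) : ℝ) : ℂ) * Complex.I)

lemma fCoeff_eq_sum_chi (p : ℕ) (Q : Finset (ZMod p)) (ξ : ZMod p) :
    fCoeff p Q ξ = ∑ x ∈ Q, chi p (ξ * x) := by
  unfold fCoeff chi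
  refine Finset.sum_congr rfl fun x _ => ?_
  congr 1
  push_cast
  ring

lemma chi_zero (p : ℕ) [NeZero p] : chi p 0 = 1 := by
  unfold chi
  rw [ZMod.val_zero]
  norm_num

lemma exp_aux (r1 r2 r3 : ℝ) (k : ℕ) (h : r1 + r2 = r3 - 2 * Real.pi * k) :
    Complex.exp ((r3 : ℂ) * Complex.I) =
      Complex.exp ((r1 : ℂ) * Complex.I) * Complex.exp ((r2 : ℂ) * Complex.I) := by
  rw [← Complex.exp_add]
  have h1 : (r1 : ℂ) * Complex.I + (r2 : ℂ) * Complex.I = ((r1 + r2 : ℝ) : ℂ) * Complex.I := by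
    push_cast; ring
  rw [h1, h]
  have h2 : (((r3 - 2 * Real.pi * k : ℝ)) : ℂ) * Complex.I =
      (r3 : ℂ) * Complex.I + ((-(k : ℤ) : ℤ) : ℂ) * (2 * (Real.pi : ℂ) * Complex.I) := by
    push_cast; ring
  rw [h2, Complex.exp_add, Complex.exp_int_mul_two_pi_mul_I, mul_one]

lemma chi_add (p : ℕ) [NeZero p] (a b : ZMod p) : chi p (a + b) = chi p a * chi p b := by
  have hp0 : (p : ℝ) ≠ 0 := Nat.cast_ne_zero.mpr (NeZero.ne p)
  unfold chi
  refine exp_aux _ _ _ ((a.val + b.val) / p) ?_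
  have hval : (a.val : ℝ) + b.val = ((a + b).val : ℝ) + p * ((a.val + b.val) / p : ℕ) := by
    have h := Nat.mod_add_div (a.val + b.val) p
    rw [ZMod.val_add]
    exact_mod_cast h.symm
  set x : ℝ := (a.val : ℝ)
  set y : ℝ := (b.val : ℝ)
  set z : ℝ := ((a + b).val : ℝ)
  set k : ℝ := (((a.val + b.val) / p : ℕ) : ℝ)
  have hx : x + y = z + (p : ℝ) * k := hval
  clear_value x y z k
  have hinv : (p : ℝ) * (p : ℝ)⁻¹ = 1 := mul_inv_cancel₀ hp0
  linear_combination (-(2 * Real.pi * (p:ℝ)⁻¹)) * hx - (2 * Real.pi * k) * hinv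

lemma chi_abs (p : ℕ) (a : ZMod p) : ‖chi p a‖ = 1 := by
  unfold chi
  exact Complex.norm_exp_ofReal_mul_I _

lemma chi_ne_zero (p : ℕ) (a : ZMod p) : chi p a ≠ 0 := Complex.exp_ne_zero _

lemma conj_chi (p : ℕ) [NeZero p] (a : ZMod p) :
    (starRingEnd ℂ) (chi p a) = chi p (-a) := by
  have h1 : chi p (-a) * chi p a = 1 := by
    rw [← chi_add, neg_add_cancel, chi_zero]
  have h2 : (starRingEnd ℂ) (chi p a) * chi p a = 1 := by
    rw [mul_comm, Complex.mul_conj, ← Complex.sq_norm, chi_abs]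
    norm_num
  have h3 := h1.trans h2.symm
  exact (mul_right_cancel₀ (chi_ne_zero p a) h3).symm

lemma chi_one_ne_one (p : ℕ) (hp : 1 < p) : chi p 1 ≠ 1 := by
  unfold chi
  rw [ZMod.val_one_eq_one_mod, Nat.mod_eq_of_lt hp]
  intro h
  rw [Complex.exp_eq_one_iff] at h
  obtain ⟨n, hn⟩ := h
  have him := congrArg Complex.im hn
  simp [Complex.mul_im, Complex.ofReal_im, Complex.ofReal_re] at him
  -- him : -(2 * π * 1 / p) = n * (2 * π)  (roughly)
  have hp0 : (0 : ℝ) < p := by positivity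
  have hn' : (n : ℝ) = -(1 / p) := by
    have hπ : (0:ℝ) < Real.pi := Real.pi_pos
    field_simp at him ⊢
    nlinarith [him]
  have h1 : (1 : ℝ) / p < 1 := by rw [div_lt_one hp0]; exact_mod_cast hp
  have h2 : (0 : ℝ) < 1 / p := by positivity
  have hn1 : -1 < n := by exact_mod_cast show (-1:ℝ) < n by rw [hn']; linarith
  have hn2 : n < 0 := by exact_mod_cast show (n:ℝ) < 0 by rw [hn']; linarith
  omega

lemma sum_chi (p : ℕ) [Fact p.Prime] (t : ZMod p) :
    ∑ a : ZMod p, chi p (a * t) = if t = 0 then (p : ℂ) else 0 := by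
  have hp : p.Prime := Fact.out
  by_cases ht : t = 0
  · simp only [ht, mul_zero, chi_zero, if_pos]
    simp [ZMod.card]
  · rw [if_neg ht]
    have hre : ∑ a : ZMod p, chi p (a * t) = ∑ a : ZMod p, chi p a :=
      Fintype.sum_equiv (Equiv.mulRight₀ t ht) _ _ fun a => rfl
    rw [hre]
    have key : chi p 1 * ∑ a : ZMod p, chi p a = ∑ a : ZMod p, chi p a := by
      rw [Finset.mul_sum]
      have h4 : ∑ a : ZMod p, chi p 1 * chi p a = ∑ a : ZMod p, chi p (1 + a) :=
        Finset.sum_congr rfl fun a _ => (chi_add p 1 a).symm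
      rw [h4]
      exact Fintype.sum_equiv (Equiv.addLeft 1) _ _ fun a => rfl
    have hne := chi_one_ne_one p hp.one_lt
    by_contra hS
    exact hne (mul_right_cancel₀ hS (by rw [key, one_mul]))

theorem fourier_bound_invariant_set (p : ℕ) (hp : p.Prime)
    (R Q : Finset (ZMod p)) (hR : IsMulSubgroup p R)
    (hQne : Q.Nonempty) (hQinv : Q * R = Q) :
    ∀ ξ : ZMod p, ξ ≠ 0 →
      ‖fCoeff p Q ξ‖ <
        (Q.card : ℝ) ^ ((1 : ℝ) / 2) * (p : ℝ) ^ ((1 : ℝ) / 2) *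
          (R.card : ℝ) ^ (-(1 : ℝ) / 2) := by
  haveI : Fact p.Prime := ⟨hp⟩
  intro ξ hξ
  obtain ⟨H, hH⟩ := hR
  -- membership characterization of R
  have hRmem : ∀ r : ZMod p, r ∈ R ↔ ∃ u : (ZMod p)ˣ, u ∈ H ∧ (u : ZMod p) = r := by
    intro r
    constructor
    · intro hr
      have : r ∈ (R : Set (ZMod p)) := hr
      rw [hH] at this
      obtain ⟨u, hu, huv⟩ := this
      exact ⟨u, hu, huv⟩
    · rintro ⟨u, hu, rfl⟩
      have : (u : ZMod p) ∈ (R : Set (ZMod p)) := by rw [hH]; exact ⟨u, hu, rfl⟩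
      exact this
  have hRne0 : ∀ r ∈ R, r ≠ 0 := by
    intro r hr
    obtain ⟨u, _, rfl⟩ := (hRmem r).1 hr
    exact u.ne_zero
  have hRinv : ∀ r ∈ R, r⁻¹ ∈ R := by
    intro r hr
    obtain ⟨u, hu, rfl⟩ := (hRmem _).1 hr
    refine (hRmem _).2 ⟨u⁻¹, inv_mem hu, ?_⟩
    exact u.val_inv_eq_inv_val
  have h1R : (1 : ZMod p) ∈ R := (hRmem 1).2 ⟨1, one_mem H, rfl⟩
  have hmulQ : ∀ r ∈ R, ∀ q ∈ Q, r * q ∈ Q := by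
    intro r hr q hq
    have h := Finset.mul_mem_mul hq hr
    rw [hQinv] at h
    rwa [mul_comm]
  -- invariance: fCoeff (r * ξ) = fCoeff ξ for r ∈ R
  have hInv : ∀ r ∈ R, fCoeff p Q (r * ξ) = fCoeff p Q ξ := by
    intro r hr
    have hr0 := hRne0 r hr
    rw [fCoeff_eq_sum_chi, fCoeff_eq_sum_chi]
    refine Finset.sum_bij' (fun x _ => r * x) (fun y _ => r⁻¹ * y)
      (fun x hx => hmulQ r hr x hx) (fun y hy => hmulQ r⁻¹ (hRinv r hr) y hy)
      (fun x hx => by field_simp) (fun y hy => by field_simp) ?_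
    intro x hx
    exact congrArg (chi p) (by ring)
  -- Parseval (complex form)
  have hPar : ∑ η : ZMod p, (Complex.normSq (fCoeff p Q η) : ℂ) = (p : ℂ) * Q.card := by
    have step : ∀ η : ZMod p, (Complex.normSq (fCoeff p Q η) : ℂ) =
        ∑ x ∈ Q, ∑ y ∈ Q, chi p (η * (x - y)) := by
      intro η
      rw [← Complex.mul_conj, fCoeff_eq_sum_chi, map_sum, Finset.sum_mul_sum]
      refine Finset.sum_congr rfl fun x _ => Finset.sum_congr rfl fun y _ => ?_
      rw [conj_chi, ← chi_add]
      exact congrArg (chi p) (by ring)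
    simp_rw [step]
    have inner : ∀ x ∈ Q, ∑ y ∈ Q, ∑ η : ZMod p, chi p (η * (x - y)) = (p : ℂ) := by
      intro x hx
      have h5 : ∀ y ∈ Q, ∑ η : ZMod p, chi p (η * (x - y)) =
          if y = x then (p : ℂ) else 0 := by
        intro y _
        rw [sum_chi p (x - y)]
        simp [sub_eq_zero, eq_comm]
      rw [Finset.sum_congr rfl h5, Finset.sum_ite_eq' Q x (fun _ => (p : ℂ)), if_pos hx]
    rw [Finset.sum_comm]
    have inner' : ∀ x ∈ Q, ∑ η : ZMod p, ∑ y ∈ Q, chi p (η * (x - y)) = (p : ℂ) := by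
      intro x hx
      rw [Finset.sum_comm]
      exact inner x hx
    rw [Finset.sum_congr rfl inner', Finset.sum_const, nsmul_eq_mul, mul_comm]
  -- Parseval (real form)
  have hParR : ∑ η : ZMod p, Complex.normSq (fCoeff p Q η) = (p : ℝ) * Q.card := by
    have := hPar
    push_cast at this ⊢
    exact_mod_cast this
  -- fCoeff at 0
  have hF0 : fCoeff p Q 0 = (Q.card : ℂ) := by
    rw [fCoeff_eq_sum_chi]
    simp [chi_zero]
  -- set of shifted frequencies
  set S : Finset (ZMod p) := R.image (· * ξ) with hS
  have hinj : Function.Injective (· * ξ) := fun a b h => by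
    have := mul_right_cancel₀ hξ h
    exact this
  have hSsum : ∑ η ∈ S, Complex.normSq (fCoeff p Q η) =
      (R.card : ℝ) * Complex.normSq (fCoeff p Q ξ) := by
    rw [hS, Finset.sum_image (fun a _ b _ h => hinj h)]
    rw [Finset.sum_congr rfl fun r hr => by rw [hInv r hr]]
    rw [Finset.sum_const, nsmul_eq_mul]
  have hSsub : S ⊆ Finset.univ.erase 0 := by
    intro η hη
    rw [hS, Finset.mem_image] at hη
    obtain ⟨r, hr, rfl⟩ := hη
    exact Finset.mem_erase.2 ⟨mul_ne_zero (hRne0 r hr) hξ, Finset.mem_univ _⟩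
  have hbound : ∑ η ∈ S, Complex.normSq (fCoeff p Q η) ≤
      ∑ η ∈ Finset.univ.erase 0, Complex.normSq (fCoeff p Q η) :=
    Finset.sum_le_sum_of_subset_of_nonneg hSsub fun η _ _ => Complex.normSq_nonneg _
  have herase : ∑ η ∈ Finset.univ.erase 0, Complex.normSq (fCoeff p Q η) =
      (p : ℝ) * Q.card - (Q.card : ℝ) ^ 2 := by
    have h := Finset.sum_erase_add Finset.univ (fun η => Complex.normSq (fCoeff p Q η))
      (Finset.mem_univ (0 : ZMod p))
    simp only [hF0, Complex.normSq_natCast] at h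
    rw [hParR] at h
    nlinarith [h]
  have hQ0 : (0 : ℝ) < Q.card := by exact_mod_cast Finset.card_pos.2 hQne
  have hR0 : (0 : ℝ) < R.card := by exact_mod_cast Finset.card_pos.2 ⟨1, h1R⟩
  have hkey : (R.card : ℝ) * Complex.normSq (fCoeff p Q ξ) < (p : ℝ) * Q.card := by
    rw [← hSsum]
    calc ∑ η ∈ S, Complex.normSq (fCoeff p Q η)
        ≤ (p : ℝ) * Q.card - (Q.card : ℝ) ^ 2 := by rw [← herase]; exact hbound
      _ < (p : ℝ) * Q.card := by nlinarith
  -- final arithmetic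
  have hp0 : (0 : ℝ) ≤ (p : ℝ) := Nat.cast_nonneg p
  have hQc0 : (0 : ℝ) ≤ (Q.card : ℝ) := le_of_lt hQ0
  have hRc0 : (0 : ℝ) ≤ (R.card : ℝ) := le_of_lt hR0
  have hRHSnn : 0 ≤ (Q.card : ℝ) ^ ((1 : ℝ) / 2) * (p : ℝ) ^ ((1 : ℝ) / 2) *
      (R.card : ℝ) ^ (-(1 : ℝ) / 2) := by positivity
  refine lt_of_pow_lt_pow_left₀ 2 hRHSnn ?_
  have hRHSsq : ((Q.card : ℝ) ^ ((1 : ℝ) / 2) * (p : ℝ) ^ ((1 : ℝ) / 2) *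
      (R.card : ℝ) ^ (-(1 : ℝ) / 2)) ^ 2 = (Q.card : ℝ) * (p : ℝ) * (R.card : ℝ)⁻¹ := by
    rw [mul_pow, mul_pow, ← Real.rpow_natCast ((Q.card : ℝ) ^ ((1:ℝ)/2)) 2,
      ← Real.rpow_natCast ((p : ℝ) ^ ((1:ℝ)/2)) 2,
      ← Real.rpow_natCast ((R.card : ℝ) ^ (-(1:ℝ)/2)) 2,
      ← Real.rpow_mul hQc0, ← Real.rpow_mul hp0, ← Real.rpow_mul hRc0]
    norm_num [Real.rpow_neg_one]
  rw [hRHSsq]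
  have hA2 : ‖fCoeff p Q ξ‖ ^ 2 = Complex.normSq (fCoeff p Q ξ) :=
    Complex.sq_norm _
  rw [hA2]
  rw [show (Q.card : ℝ) * (p : ℝ) * (R.card : ℝ)⁻¹ = ((p : ℝ) * Q.card) / R.card by ring]
  rw [lt_div_iff₀ hR0]
  linarith [hkey]
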